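/- If a simple polygon P has no critical vertices with respect to an interior point q, then V_k(P,q) = P for every k ≥ 0; in particular ∂V_k(P,q) = ∂P. -/

import Mathlib

open Set

/-- A simple polygon in the plane, given by its cyclic sequence of vertices.
Non-adjacent edges are disjoint, and adjacent edges meet exactly in their
shared vertex. -/
structure SimplePolygon where
  n : ℕ
  three_le : 3 ≤ n
  vtx : ZMod n → ℝ × ℝ
  inj : Function.Injective vtx
  nondegenerate : ∀ i j : ZMod n, i ≠ j → i + 1 ≠ j → j + 1 ≠ i →
    segment ℝ (vtx i) (vtx (i + 1)) ∩ segment ℝ (vtx j) (vtx (j + 1)) = ∅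
  consecutive : ∀ i : ZMod n,
    segment ℝ (vtx i) (vtx (i + 1)) ∩ segment ℝ (vtx (i + 1)) (vtx (i + 1 + 1))
      = {vtx (i + 1)}

namespace SimplePolygon

variable (P : SimplePolygon)

/-- The `i`-th edge of the polygon, from vertex `i` to vertex `i+1`. -/
def edge (i : ZMod P.n) : Set (ℝ × ℝ) := segment ℝ (P.vtx i) (P.vtx (i + 1))

/-- The boundary `∂P` of the polygon: the union of its edges. -/
def boundary : Set (ℝ × ℝ) := ⋃ i : ZMod P.n, P.edge i

/-- The interior of the polygon (Jordan): points off the boundary whose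
connected component in the complement of the boundary is bounded. -/
def inside : Set (ℝ × ℝ) :=
  {x | x ∉ P.boundary ∧ Bornology.IsBounded (connectedComponentIn P.boundaryᶜ x)}

/-- The polygon as a region of the plane: interior together with boundary. -/
def region : Set (ℝ × ℝ) := P.inside ∪ P.boundary

/-- The set of (indices of) edges of `P` properly met by the open segment `qp`
(the endpoints `q`, `p` are not counted). -/
def crossSet (q p : ℝ × ℝ) : Set (ZMod P.n) :=
  {i | (openSegment ℝ q p ∩ P.edge i).Nonempty}

/-- The number of times the segment `qp` crosses the boundary of `P`
(endpoints not counted). -/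
noncomputable def crossCount (q p : ℝ × ℝ) : ℕ := (P.crossSet q p).ncard

/-- The k-visibility region `V_k(P,q)`: the points of `P` whose segment to `q`
crosses the boundary at most `k` times. -/
def vis (q : ℝ × ℝ) (k : ℕ) : Set (ℝ × ℝ) :=
  {p | p ∈ P.region ∧ P.crossCount q p ≤ k}

/-- No vertex of `P` lies on the segment `qp`. -/
def segAvoidsVtx (q p : ℝ × ℝ) : Prop := ∀ i : ZMod P.n, P.vtx i ∉ segment ℝ q p

/-- Weak general position: `q` lies on no line through two vertices of `P`. -/
def wgp (q : ℝ × ℝ) : Prop :=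
  ∀ i j : ZMod P.n, i ≠ j → ¬ Collinear ℝ ({q, P.vtx i, P.vtx j} : Set (ℝ × ℝ))

/-- Signed area test: positive iff `x` is strictly to the left of the ray `qv`. -/
noncomputable def cross2 (q v x : ℝ × ℝ) : ℝ :=
  (v.1 - q.1) * (x.2 - q.2) - (v.2 - q.2) * (x.1 - q.1)

/-- Vertex `i` is critical for `q`: both incident edges (i.e. both neighbouring
vertices) lie strictly on the same side of the line through `q` and `vtx i`. -/
def isCritical (q : ℝ × ℝ) (i : ZMod P.n) : Prop :=
  0 < cross2 q (P.vtx i) (P.vtx (i - 1)) * cross2 q (P.vtx i) (P.vtx (i + 1))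

/-- A start critical vertex: both incident edges to the left of ray `qv`. -/
def isStart (q : ℝ × ℝ) (i : ZMod P.n) : Prop :=
  0 < cross2 q (P.vtx i) (P.vtx (i - 1)) ∧ 0 < cross2 q (P.vtx i) (P.vtx (i + 1))

/-- An end critical vertex: both incident edges to the right of ray `qv`. -/
def isEnd (q : ℝ × ℝ) (i : ZMod P.n) : Prop :=
  cross2 q (P.vtx i) (P.vtx (i - 1)) < 0 ∧ cross2 q (P.vtx i) (P.vtx (i + 1)) < 0

/-- The unit vector of direction `θ`. -/
noncomputable def dir (θ : ℝ) : ℝ × ℝ := (Real.cos θ, Real.sin θ)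

/-- The ray `r_θ` from `q` in direction `θ`. -/
def rayFrom (q : ℝ × ℝ) (θ : ℝ) : Set (ℝ × ℝ) :=
  {x | ∃ t : ℝ, 0 ≤ t ∧ x = q + t • dir θ}

/-- The edge list of the ray `r_θ` (as a set of edge indices). -/
def hits (q : ℝ × ℝ) (θ : ℝ) : Set (ZMod P.n) :=
  {i | (rayFrom q θ ∩ P.edge i).Nonempty}

/-- The parameter (distance from `q`) at which the ray `r_θ` first meets edge `i`. -/
noncomputable def hitTime (q : ℝ × ℝ) (θ : ℝ) (i : ZMod P.n) : ℝ :=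
  sInf {t : ℝ | 0 ≤ t ∧ q + t • dir θ ∈ P.edge i}

/-- The position (rank) of edge `i` in the distance-ordered edge list of `r_θ`:
the number of hit edges met strictly earlier. -/
noncomputable def rank (q : ℝ × ℝ) (θ : ℝ) (i : ZMod P.n) : ℕ :=
  {j | j ∈ P.hits q θ ∧ P.hitTime q θ j < P.hitTime q θ i}.ncard

end SimplePolygon

open SimplePolygon

namespace NoCrit

open Filter Topology Bornology

variable {P : SimplePolygon} {q : ℝ × ℝ}

/-- The signed area of edge `i` as seen from `q`. -/
noncomputable def Kay (P : SimplePolygon) (q : ℝ × ℝ) (i : ZMod P.n) : ℝ :=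
  cross2 q (P.vtx i) (P.vtx (i + 1))

lemma cross2_swap (q a b : ℝ × ℝ) : cross2 q a b = - cross2 q b a := by
  simp only [cross2]; ring

lemma cross2_self (q a : ℝ × ℝ) : cross2 q a a = 0 := by
  simp only [cross2]; ring

lemma nezero_n (P : SimplePolygon) : NeZero P.n := ⟨by have := P.three_le; omega⟩

lemma one_ne_zero_zmod (P : SimplePolygon) : (1 : ZMod P.n) ≠ 0 := by
  have : ((1 : ℕ) : ZMod P.n) ≠ 0 := by
    rw [Ne, ZMod.natCast_eq_zero_iff, Nat.dvd_one]
    have := P.three_le; omega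
  simpa using this

lemma self_ne_add_one (i : ZMod P.n) : i ≠ i + 1 := by
  intro h
  have : (1 : ZMod P.n) = 0 := by
    have := h.symm
    rwa [add_comm, add_eq_right] at this
  exact one_ne_zero_zmod P this

/-- cross2 vanishes implies the three points are collinear. -/
lemma collinear_of_cross2 {a b : ℝ × ℝ} (h : cross2 q a b = 0) :
    Collinear ℝ ({q, a, b} : Set (ℝ × ℝ)) := by
  by_cases haq : a = q
  · rw [haq]
    have : ({q, q, b} : Set (ℝ × ℝ)) = {q, b} := by simp
    rw [this]
    exact collinear_pair ℝ q b
  · rw [collinear_iff_of_mem (Set.mem_insert q _)]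
    refine ⟨a - q, ?_⟩
    intro p hp
    have hne : (a.1 - q.1) ^ 2 + (a.2 - q.2) ^ 2 ≠ 0 := by
      intro h0
      apply haq
      have h1 : a.1 - q.1 = 0 := by nlinarith [sq_nonneg (a.1 - q.1), sq_nonneg (a.2 - q.2)]
      have h2 : a.2 - q.2 = 0 := by nlinarith [sq_nonneg (a.1 - q.1), sq_nonneg (a.2 - q.2)]
      exact Prod.ext (by linarith) (by linarith)
    rcases hp with h1 | h1 | h1
    · exact ⟨0, by simp [h1]⟩
    · refine ⟨1, ?_⟩
      rw [h1]; simp only [vadd_eq_add, one_smul]; apply Prod.ext <;>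
        simp
    · subst h1
      have hc : (a.1 - q.1) * (p.2 - q.2) - (a.2 - q.2) * (p.1 - q.1) = 0 := h
      set den := (a.1 - q.1) ^ 2 + (a.2 - q.2) ^ 2 with hden
      set num := (a.1 - q.1) * (p.1 - q.1) + (a.2 - q.2) * (p.2 - q.2) with hnum
      refine ⟨num / den, ?_⟩
      have e1 : (p.1 - q.1) * den = num * (a.1 - q.1) := by
        rw [hden, hnum]; linear_combination (-(a.2 - q.2)) * hc
      have e2 : (p.2 - q.2) * den = num * (a.2 - q.2) := by
        rw [hden, hnum]; linear_combination (a.1 - q.1) * hc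
      apply Prod.ext
      · have : ((num / den) • (a - q) + q).1 = num / den * (a.1 - q.1) + q.1 := by
          simp [Prod.fst_add, Prod.smul_fst, smul_eq_mul, Prod.fst_sub]
        simp only [vadd_eq_add]
        rw [this]
        field_simp
        linear_combination e1
      · have : ((num / den) • (a - q) + q).2 = num / den * (a.2 - q.2) + q.2 := by
          simp [Prod.snd_add, Prod.smul_snd, smul_eq_mul, Prod.snd_sub]
        simp only [vadd_eq_add]
        rw [this]
        field_simp
        linear_combination e2

lemma cross2_ne (hw : P.wgp q) {i j : ZMod P.n} (h : i ≠ j) :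
    cross2 q (P.vtx i) (P.vtx j) ≠ 0 := fun h0 => hw i j h (collinear_of_cross2 h0)

lemma Kay_ne (hw : P.wgp q) (i : ZMod P.n) : Kay P q i ≠ 0 :=
  cross2_ne hw (self_ne_add_one i)

/-- All the `Kay`s have a common sign `ε`. -/
lemma exists_eps (hw : P.wgp q) (hnc : ∀ i : ZMod P.n, ¬ P.isCritical q i) :
    ∃ ε : ℝ, ε ≠ 0 ∧ ∀ i, 0 < ε * Kay P q i := by
  haveI := nezero_n P
  have hstep : ∀ i : ZMod P.n, 0 < Kay P q i * Kay P q (i + 1) := by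
    intro i
    have h := hnc (i + 1)
    rw [SimplePolygon.isCritical] at h
    push_neg at h
    have e1 : i + 1 - 1 = i := by ring
    rw [e1] at h
    have e2 : cross2 q (P.vtx (i + 1)) (P.vtx i) = - Kay P q i := by
      rw [cross2_swap]; rfl
    have e3 : cross2 q (P.vtx (i + 1)) (P.vtx (i + 1 + 1)) = Kay P q (i + 1) := rfl
    rw [e2, e3] at h
    have hne : Kay P q i * Kay P q (i + 1) ≠ 0 :=
      mul_ne_zero (Kay_ne hw i) (Kay_ne hw (i + 1))
    have : 0 ≤ Kay P q i * Kay P q (i + 1) := by nlinarith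
    exact lt_of_le_of_ne this (Ne.symm hne)
  have hnat : ∀ m : ℕ, 0 < Kay P q 0 * Kay P q (m : ZMod P.n) := by
    intro m
    induction m with
    | zero => simpa using mul_self_pos.mpr (Kay_ne hw 0)
    | succ m ih =>
      have h2 := hstep (m : ZMod P.n)
      have : ((m + 1 : ℕ) : ZMod P.n) = (m : ZMod P.n) + 1 := by push_cast; ring
      rw [this]
      nlinarith [mul_self_pos.mpr (Kay_ne hw (m : ZMod P.n))]
  have hall : ∀ i : ZMod P.n, 0 < Kay P q 0 * Kay P q i := by
    intro i
    have := hnat i.val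
    rwa [ZMod.natCast_zmod_val] at this
  rcases lt_trichotomy (Kay P q 0) 0 with h0 | h0 | h0
  · refine ⟨-1, by norm_num, fun i => ?_⟩
    have := hall i
    nlinarith
  · exact absurd h0 (Kay_ne hw 0)
  · refine ⟨1, by norm_num, fun i => ?_⟩
    have := hall i
    nlinarith

end NoCrit
namespace NoCrit

variable {P : SimplePolygon} {q : ℝ × ℝ} {ε : ℝ}

lemma edge_rep {i : ZMod P.n} {x : ℝ × ℝ} (hx : x ∈ P.edge i) :
    ∃ a b : ℝ, 0 ≤ a ∧ 0 ≤ b ∧ a + b = 1 ∧ x = a • P.vtx i + b • P.vtx (i + 1) := by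
  obtain ⟨a, b, ha, hb, hab, h⟩ := hx
  exact ⟨a, b, ha, hb, hab, h.symm⟩

lemma mem_edge {i : ZMod P.n} {a b : ℝ} (ha : 0 ≤ a) (hb : 0 ≤ b) (hab : a + b = 1) :
    a • P.vtx i + b • P.vtx (i + 1) ∈ P.edge i := ⟨a, b, ha, hb, hab, rfl⟩

lemma edge_subset_boundary {i : ZMod P.n} : P.edge i ⊆ P.boundary := fun _ h =>
  Set.mem_iUnion.mpr ⟨i, h⟩

lemma vtx_mem_edge_left (i : ZMod P.n) : P.vtx i ∈ P.edge i :=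
  left_mem_segment ℝ _ _

lemma vtx_mem_edge_right (i : ZMod P.n) : P.vtx (i + 1) ∈ P.edge i :=
  right_mem_segment ℝ _ _

lemma cross2_combo {a b : ℝ} (hab : a + b = 1) (p r Y : ℝ × ℝ) :
    cross2 q (a • p + b • r) Y = a * cross2 q p Y + b * cross2 q r Y := by
  have ha : a = 1 - b := by linarith
  subst ha
  simp only [cross2, Prod.fst_add, Prod.snd_add, Prod.smul_fst, Prod.smul_snd, smul_eq_mul]
  ring

lemma cross2_combo' {a b : ℝ} (hab : a + b = 1) (p r Y : ℝ × ℝ) :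
    cross2 q Y (a • p + b • r) = a * cross2 q Y p + b * cross2 q Y r := by
  have ha : a = 1 - b := by linarith
  subst ha
  simp only [cross2, Prod.fst_add, Prod.snd_add, Prod.smul_fst, Prod.smul_snd, smul_eq_mul]
  ring

lemma cross2_smul_rel {y z : ℝ × ℝ} {t : ℝ} (h : y - q = t • (z - q)) (Y : ℝ × ℝ) :
    cross2 q y Y = t * cross2 q z Y := by
  have h1 : y.1 - q.1 = t * (z.1 - q.1) := by
    have := congrArg Prod.fst h
    simpa [Prod.fst_sub, Prod.smul_fst, smul_eq_mul] using this
  have h2 : y.2 - q.2 = t * (z.2 - q.2) := by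
    have := congrArg Prod.snd h
    simpa [Prod.snd_sub, Prod.smul_snd, smul_eq_mul] using this
  simp only [cross2]
  linear_combination (Y.2 - q.2) * h1 - (Y.1 - q.1) * h2

/-- Points of a single edge are radially distinct: same cross2 direction forces equality. -/
lemma eq_of_same_edge (hw : P.wgp q) {i : ZMod P.n} {x y : ℝ × ℝ}
    (hx : x ∈ P.edge i) (hy : y ∈ P.edge i) (h : cross2 q x y = 0) : x = y := by
  obtain ⟨a, b, ha, hb, hab, hxr⟩ := edge_rep hx
  obtain ⟨c, d, hc, hd, hcd, hyr⟩ := edge_rep hy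
  have hK := Kay_ne hw i
  have e : cross2 q x y = (a * d - b * c) * Kay P q i := by
    rw [hxr, hyr, cross2_combo hab, cross2_combo' hcd, cross2_combo' hcd]
    have s1 : cross2 q (P.vtx i) (P.vtx i) = 0 := cross2_self q _
    have s2 : cross2 q (P.vtx (i + 1)) (P.vtx (i + 1)) = 0 := cross2_self q _
    have s3 : cross2 q (P.vtx (i + 1)) (P.vtx i) = - Kay P q i := by
      rw [cross2_swap]; rfl
    have s4 : cross2 q (P.vtx i) (P.vtx (i + 1)) = Kay P q i := rfl
    rw [s1, s2, s3, s4]; ring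
  rw [e] at h
  have habc : a * d - b * c = 0 := by
    rcases mul_eq_zero.mp h with h' | h'
    · exact h'
    · exact absurd h' hK
  have hac : a = c := by
    have hb' : b = 1 - a := by linarith
    have hd' : d = 1 - c := by linarith
    rw [hb', hd'] at habc
    linarith [habc]
  have hbd : b = d := by linarith
  rw [hxr, hyr, hac, hbd]

/-- Radially aligned points on adjacent edges must both be the shared vertex. -/
lemma adj_edges (hK : ∀ i, 0 < ε * Kay P q i) {j : ZMod P.n} {y z : ℝ × ℝ} {τ : ℝ}
    (hy : y ∈ P.edge j) (hz : z ∈ P.edge (j + 1)) (hτ : 0 < τ)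
    (hrel : y - q = τ • (z - q)) : y = z := by
  obtain ⟨a, b, ha, hb, hab, hyr⟩ := edge_rep hy
  obtain ⟨c, d, hc, hd, hcd, hzr⟩ := edge_rep hz
  have E1 : cross2 q y (P.vtx (j + 1)) = a * Kay P q j := by
    rw [hyr, cross2_combo hab]
    have s1 : cross2 q (P.vtx (j + 1)) (P.vtx (j + 1)) = 0 := cross2_self q _
    have s2 : cross2 q (P.vtx j) (P.vtx (j + 1)) = Kay P q j := rfl
    rw [s1, s2]; ring
  have E2 : cross2 q z (P.vtx (j + 1)) = - (d * Kay P q (j + 1)) := by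
    rw [hzr, cross2_combo hcd]
    have s1 : cross2 q (P.vtx (j + 1)) (P.vtx (j + 1)) = 0 := cross2_self q _
    have s2 : cross2 q (P.vtx (j + 1 + 1)) (P.vtx (j + 1)) = - Kay P q (j + 1) := by
      rw [cross2_swap]; rfl
    rw [s1, s2]; ring
  have E3 := cross2_smul_rel hrel (P.vtx (j + 1))
  rw [E1, E2] at E3
  have key : a * (ε * Kay P q j) + τ * (d * (ε * Kay P q (j + 1))) = 0 := by
    linear_combination ε * E3
  have t1 : 0 ≤ a * (ε * Kay P q j) := mul_nonneg ha (le_of_lt (hK j))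
  have t2 : 0 ≤ τ * (d * (ε * Kay P q (j + 1))) :=
    mul_nonneg (le_of_lt hτ) (mul_nonneg hd (le_of_lt (hK (j + 1))))
  have ha0 : a = 0 := by
    have : a * (ε * Kay P q j) = 0 := by linarith
    rcases mul_eq_zero.mp this with h' | h'
    · exact h'
    · exact absurd h' (ne_of_gt (hK j))
  have hd0 : d = 0 := by
    have : τ * (d * (ε * Kay P q (j + 1))) = 0 := by linarith
    rcases mul_eq_zero.mp this with h' | h'
    · exact absurd h' (ne_of_gt hτ)
    · rcases mul_eq_zero.mp h' with h'' | h''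
      · exact h''
      · exact absurd h'' (ne_of_gt (hK (j + 1)))
  have hb1 : b = 1 := by linarith
  have hc1 : c = 1 := by linarith
  rw [hyr, hzr, ha0, hd0, hb1, hc1]
  simp

/-- Radially aligned points on adjacent edges (other order). -/
lemma adj_edges' (hK : ∀ i, 0 < ε * Kay P q i) {j : ZMod P.n} {y z : ℝ × ℝ} {τ : ℝ}
    (hy : y ∈ P.edge (j + 1)) (hz : z ∈ P.edge j) (hτ : 0 < τ)
    (hrel : y - q = τ • (z - q)) : y = z := by
  obtain ⟨a, b, ha, hb, hab, hyr⟩ := edge_rep hy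
  obtain ⟨c, d, hc, hd, hcd, hzr⟩ := edge_rep hz
  have E1 : cross2 q y (P.vtx (j + 1)) = - (b * Kay P q (j + 1)) := by
    rw [hyr, cross2_combo hab]
    have s1 : cross2 q (P.vtx (j + 1)) (P.vtx (j + 1)) = 0 := cross2_self q _
    have s2 : cross2 q (P.vtx (j + 1 + 1)) (P.vtx (j + 1)) = - Kay P q (j + 1) := by
      rw [cross2_swap]; rfl
    rw [s1, s2]; ring
  have E2 : cross2 q z (P.vtx (j + 1)) = c * Kay P q j := by
    rw [hzr, cross2_combo hcd]
    have s1 : cross2 q (P.vtx (j + 1)) (P.vtx (j + 1)) = 0 := cross2_self q _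
    have s2 : cross2 q (P.vtx j) (P.vtx (j + 1)) = Kay P q j := rfl
    rw [s1, s2]; ring
  have E3 := cross2_smul_rel hrel (P.vtx (j + 1))
  rw [E1, E2] at E3
  have key : b * (ε * Kay P q (j + 1)) + τ * (c * (ε * Kay P q j)) = 0 := by
    linear_combination (-ε) * E3
  have t1 : 0 ≤ b * (ε * Kay P q (j + 1)) := mul_nonneg hb (le_of_lt (hK (j + 1)))
  have t2 : 0 ≤ τ * (c * (ε * Kay P q j)) :=
    mul_nonneg (le_of_lt hτ) (mul_nonneg hc (le_of_lt (hK j)))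
  have hb0 : b = 0 := by
    have : b * (ε * Kay P q (j + 1)) = 0 := by linarith
    rcases mul_eq_zero.mp this with h' | h'
    · exact h'
    · exact absurd h' (ne_of_gt (hK (j + 1)))
  have hc0 : c = 0 := by
    have : τ * (c * (ε * Kay P q j)) = 0 := by linarith
    rcases mul_eq_zero.mp this with h' | h'
    · exact absurd h' (ne_of_gt hτ)
    · rcases mul_eq_zero.mp h' with h'' | h''
      · exact h''
      · exact absurd h'' (ne_of_gt (hK j))
  have ha1 : a = 1 := by linarith
  have hd1 : d = 1 := by linarith
  rw [hyr, hzr, hb0, hc0, ha1, hd1]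
  simp

/-- Two-dimensional basis lemma. -/
lemma basis2 {d c₁ c₂ : ℝ × ℝ} (h1 : d.1 * c₁.2 - d.2 * c₁.1 = 0)
    (h2 : d.1 * c₂.2 - d.2 * c₂.1 = 0) (h3 : c₁.1 * c₂.2 - c₁.2 * c₂.1 ≠ 0) :
    d = 0 := by
  have hd1 : d.1 = 0 := by
    have : d.1 * (c₁.1 * c₂.2 - c₁.2 * c₂.1) = 0 := by
      linear_combination c₁.1 * h2 - c₂.1 * h1
    rcases mul_eq_zero.mp this with h' | h'
    · exact h'
    · exact absurd h' h3
  have hd2 : d.2 = 0 := by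
    have : d.2 * (c₁.1 * c₂.2 - c₁.2 * c₂.1) = 0 := by
      linear_combination c₁.2 * h2 - c₂.2 * h1
    rcases mul_eq_zero.mp this with h' | h'
    · exact h'
    · exact absurd h' h3
  exact Prod.ext hd1 hd2

end NoCrit
namespace NoCrit

variable {P : SimplePolygon} {q : ℝ × ℝ} {ε : ℝ}

open Filter Topology Bornology

/-- The set of boundary points radially visible from `q` with no earlier boundary point. -/
def Fstar (P : SimplePolygon) (q : ℝ × ℝ) : Set (ℝ × ℝ) :=
  {x | x ∈ P.boundary ∧ ∀ y ∈ P.boundary, y ∈ segment ℝ q x → y = x}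

lemma edge_compact (i : ZMod P.n) : IsCompact (P.edge i) := by
  rw [SimplePolygon.edge, segment_eq_image']
  exact (isCompact_Icc.image (by fun_prop))

lemma edge_closed (i : ZMod P.n) : IsClosed (P.edge i) := (edge_compact i).isClosed

lemma boundary_compact (P : SimplePolygon) : IsCompact P.boundary := by
  haveI := nezero_n P
  exact isCompact_iUnion fun i => edge_compact i

lemma boundary_closed (P : SimplePolygon) : IsClosed P.boundary :=
  (boundary_compact P).isClosed

lemma vtx_ne_q (hqb : q ∉ P.boundary) (i : ZMod P.n) : P.vtx i ≠ q := by
  intro h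
  exact hqb (h ▸ edge_subset_boundary (vtx_mem_edge_left i))

lemma seg_rep {y z : ℝ × ℝ} (h : y ∈ segment ℝ q z) :
    ∃ b0 : ℝ, 0 ≤ b0 ∧ b0 ≤ 1 ∧ y - q = b0 • (z - q) := by
  obtain ⟨a, b, ha, hb, hab, hs⟩ := h
  refine ⟨b, hb, by linarith, ?_⟩
  rw [← hs]
  have ha' : a = 1 - b := by linarith
  subst ha'
  module

lemma seg_mk {z : ℝ × ℝ} {b0 : ℝ} (h0 : 0 ≤ b0) (h1 : b0 ≤ 1) :
    q + b0 • (z - q) ∈ segment ℝ q z := by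
  refine ⟨1 - b0, b0, by linarith, h0, by ring, ?_⟩
  module

lemma boundary_preconnected (P : SimplePolygon) : IsPreconnected P.boundary := by
  haveI := nezero_n P
  have key : ∀ m : ℕ, IsPreconnected (⋃ k ∈ Finset.range (m + 1), P.edge (k : ZMod P.n)) := by
    intro m
    induction m with
    | zero =>
      have : (⋃ k ∈ Finset.range 1, P.edge (k : ZMod P.n)) = P.edge ((0 : ℕ) : ZMod P.n) := by
        simp
      rw [this]
      exact (convex_segment _ _).isPreconnected
    | succ m ih =>
      rw [Finset.range_add_one, Finset.set_biUnion_insert]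
      have hpt : P.vtx ((m + 1 : ℕ) : ZMod P.n) ∈ P.edge ((m + 1 : ℕ) : ZMod P.n) :=
        vtx_mem_edge_left _
      have hpt2 : P.vtx ((m + 1 : ℕ) : ZMod P.n) ∈
          ⋃ k ∈ Finset.range (m + 1), P.edge (k : ZMod P.n) := by
        apply Set.mem_biUnion (Finset.self_mem_range_succ m)
        have : ((m + 1 : ℕ) : ZMod P.n) = (m : ZMod P.n) + 1 := by push_cast; ring
        rw [this]
        exact vtx_mem_edge_right _
      exact IsPreconnected.union _ hpt hpt2 (convex_segment _ _).isPreconnected ih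
  have hb : P.boundary = ⋃ k ∈ Finset.range ((P.n - 1) + 1), P.edge (k : ZMod P.n) := by
    ext x
    simp only [SimplePolygon.boundary, Set.mem_iUnion, Finset.mem_range]
    constructor
    · rintro ⟨i, hi⟩
      refine ⟨i.val, ?_, ?_⟩
      · have := ZMod.val_lt i; omega
      · rwa [ZMod.natCast_zmod_val]
    · rintro ⟨k, _, hk⟩
      exact ⟨_, hk⟩
  rw [hb]
  exact key _

lemma Fstar_nonempty (hqb : q ∉ P.boundary) : (Fstar P q).Nonempty := by
  haveI := nezero_n P
  obtain ⟨x, hxb, hmin⟩ := (boundary_compact P).exists_isMinOn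
    ⟨P.vtx 0, edge_subset_boundary (vtx_mem_edge_left 0)⟩
    ((continuous_id.dist continuous_const).continuousOn (s := P.boundary))
  refine ⟨x, hxb, fun y hyb hyseg => ?_⟩
  obtain ⟨b0, h0, h1, hvec⟩ := seg_rep hyseg
  have hxq : x ≠ q := fun h => hqb (h ▸ hxb)
  have hdist : dist y q = b0 * dist x q := by
    rw [dist_eq_norm, dist_eq_norm, hvec, norm_smul, Real.norm_of_nonneg h0]
  have hd : dist x q ≤ dist y q := hmin hyb
  have hxqpos : 0 < dist x q := dist_pos.mpr hxq
  have hb1 : b0 = 1 := by nlinarith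
  rw [hb1, one_smul] at hvec
  exact sub_left_inj.mp hvec

end NoCrit
namespace NoCrit

variable {P : SimplePolygon} {q : ℝ × ℝ} {ε : ℝ}

open Filter Topology Bornology

lemma cross2_cont (q w : ℝ × ℝ) : Continuous fun p : ℝ × ℝ => cross2 q p w := by
  simp only [cross2]
  fun_prop

lemma eps_ne (hK : ∀ i, 0 < ε * Kay P q i) : ε ≠ 0 := by
  intro h
  have := hK 0
  rw [h, zero_mul] at this
  exact lt_irrefl 0 this

lemma Kay_ne' (hK : ∀ i, 0 < ε * Kay P q i) (i : ZMod P.n) : Kay P q i ≠ 0 := by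
  intro h
  have := hK i
  rw [h, mul_zero] at this
  exact lt_irrefl 0 this

/-- Main local construction: if `y ∈ edge e` lies strictly inside the segment `q z`, then
for all `z'` near `z` whose direction lies in the cone of edge `e`, there is a boundary
point strictly inside segment `q z'`. -/
lemma hit (hK : ∀ i, 0 < ε * Kay P q i) (hqb : q ∉ P.boundary)
    {e : ZMod P.n} {z y : ℝ × ℝ} {t₀ : ℝ}
    (hy : y ∈ P.edge e) (hrel : y - q = t₀ • (z - q)) (ht0 : 0 < t₀) (ht1 : t₀ < 1) :
    ∀ᶠ z' in nhds z, (ε * cross2 q z' (P.vtx e) ≤ 0 ∧ 0 ≤ ε * cross2 q z' (P.vtx (e + 1))) →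
      ∃ y' ∈ P.boundary, y' ∈ segment ℝ q z' ∧ y' ≠ z' := by
  have hεne : ε ≠ 0 := eps_ne hK
  have hKe := hK e
  have hKne : Kay P q e ≠ 0 := Kay_ne' hK e
  obtain ⟨a, b, ha, hb, hab, hyr⟩ := edge_rep hy
  -- values at z
  have hyve : cross2 q y (P.vtx e) = - (b * Kay P q e) := by
    rw [hyr, cross2_combo hab]
    rw [cross2_self, show cross2 q (P.vtx (e + 1)) (P.vtx e) = - Kay P q e by
      rw [cross2_swap]; rfl]
    ring
  have hyve1 : cross2 q y (P.vtx (e + 1)) = a * Kay P q e := by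
    rw [hyr, cross2_combo hab]
    rw [cross2_self, show cross2 q (P.vtx e) (P.vtx (e + 1)) = Kay P q e from rfl]
    ring
  have hXz : t₀ * cross2 q z (P.vtx e) = - (b * Kay P q e) := by
    rw [← cross2_smul_rel hrel]; exact hyve
  have hYz : t₀ * cross2 q z (P.vtx (e + 1)) = a * Kay P q e := by
    rw [← cross2_smul_rel hrel]; exact hyve1
  have hDz : t₀ * (cross2 q z (P.vtx (e + 1)) - cross2 q z (P.vtx e)) = Kay P q e := by
    linear_combination hYz - hXz + Kay P q e * hab
  have hDz' : 0 < ε * (cross2 q z (P.vtx (e + 1)) - cross2 q z (P.vtx e)) := by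
    have h2 : t₀ * (ε * (cross2 q z (P.vtx (e + 1)) - cross2 q z (P.vtx e))) = ε * Kay P q e := by
      linear_combination ε * hDz
    have h3 : 0 < t₀ * (ε * (cross2 q z (P.vtx (e + 1)) - cross2 q z (P.vtx e))) := by
      rw [h2]; exact hKe
    by_contra hx
    push_neg at hx
    nlinarith
  have hDzne : cross2 q z (P.vtx (e + 1)) - cross2 q z (P.vtx e) ≠ 0 := by
    intro h
    rw [h, mul_zero] at hDz'
    exact lt_irrefl 0 hDz'
  have hτz : Kay P q e / (cross2 q z (P.vtx (e + 1)) - cross2 q z (P.vtx e)) = t₀ := by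
    rw [div_eq_iff hDzne]
    linear_combination - hDz
  have hyq : y ≠ q := by
    intro h
    exact hqb (h ▸ edge_subset_boundary hy)
  have hzq : z ≠ q := by
    intro h
    apply hyq
    rw [h] at hrel
    simpa [sub_eq_zero] using hrel
  -- eventual facts
  have hDcont : Continuous fun p : ℝ × ℝ =>
      ε * (cross2 q p (P.vtx (e + 1)) - cross2 q p (P.vtx e)) :=
    continuous_const.mul ((cross2_cont q _).sub (cross2_cont q _))
  have ev1 : ∀ᶠ z' in nhds z,
      0 < ε * (cross2 q z' (P.vtx (e + 1)) - cross2 q z' (P.vtx e)) :=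
    hDcont.continuousAt.eventually (eventually_gt_nhds hDz')
  have hτcont : ContinuousAt (fun p : ℝ × ℝ =>
      Kay P q e / (cross2 q p (P.vtx (e + 1)) - cross2 q p (P.vtx e))) z :=
    continuousAt_const.div ((cross2_cont q _).sub (cross2_cont q _)).continuousAt hDzne
  have ev2 : ∀ᶠ z' in nhds z,
      Kay P q e / (cross2 q z' (P.vtx (e + 1)) - cross2 q z' (P.vtx e)) < 1 :=
    hτcont.eventually (eventually_lt_nhds (by simp only [hτz]; exact ht1))
  have ev3 : ∀ᶠ z' in nhds z, z' ≠ q := eventually_ne_nhds hzq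
  filter_upwards [ev1, ev2, ev3] with z' hD' hτ' hzq' hcone
  set Xv := cross2 q z' (P.vtx e) with hXv
  set Yv := cross2 q z' (P.vtx (e + 1)) with hYv
  have hDne : Yv - Xv ≠ 0 := by
    intro h
    rw [h, mul_zero] at hD'
    exact lt_irrefl 0 hD'
  have hεDne : ε * (Yv - Xv) ≠ 0 := mul_ne_zero hεne hDne
  set τv := Kay P q e / (Yv - Xv) with hτv
  have hτpos : 0 < τv := by
    rw [hτv, show Kay P q e / (Yv - Xv) = (ε * Kay P q e) / (ε * (Yv - Xv)) by
      rw [mul_div_mul_left _ _ hεne]]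
    exact div_pos (hK e) hD'
  set A := (ε * Yv) / (ε * (Yv - Xv)) with hA
  set B := (-(ε * Xv)) / (ε * (Yv - Xv)) with hB
  have hA0 : 0 ≤ A := div_nonneg hcone.2 hD'.le
  have hB0 : 0 ≤ B := div_nonneg (neg_nonneg.mpr hcone.1) hD'.le
  have hABsum : A + B = 1 := by
    rw [hA, hB]
    field_simp
    ring
  set y' := A • P.vtx e + B • P.vtx (e + 1) with hy'
  have hy'edge : y' ∈ P.edge e := mem_edge hA0 hB0 hABsum
  -- the radial identity
  have hc1 : cross2 q y' (P.vtx e) = - (B * Kay P q e) := by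
    rw [hy', cross2_combo hABsum, cross2_self, show cross2 q (P.vtx (e + 1)) (P.vtx e)
      = - Kay P q e by rw [cross2_swap]; rfl]
    ring
  have hc2 : cross2 q y' (P.vtx (e + 1)) = A * Kay P q e := by
    rw [hy', cross2_combo hABsum, cross2_self,
      show cross2 q (P.vtx e) (P.vtx (e + 1)) = Kay P q e from rfl]
    ring
  have hw0 : (q + τv • (z' - q)) - q = τv • (z' - q) := add_sub_cancel_left q _
  have hw1 : cross2 q (q + τv • (z' - q)) (P.vtx e) = τv * Xv :=
    cross2_smul_rel hw0 _
  have hw2 : cross2 q (q + τv • (z' - q)) (P.vtx (e + 1)) = τv * Yv :=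
    cross2_smul_rel hw0 _
  have hval1 : cross2 q y' (P.vtx e) = cross2 q (q + τv • (z' - q)) (P.vtx e) := by
    rw [hc1, hw1, hB, hτv]
    field_simp
  have hval2 : cross2 q y' (P.vtx (e + 1)) = cross2 q (q + τv • (z' - q)) (P.vtx (e + 1)) := by
    rw [hc2, hw2, hA, hτv]
    field_simp
  have hid : y' = q + τv • (z' - q) := by
    have hd := basis2 (d := y' - (q + τv • (z' - q))) (c₁ := P.vtx e - q)
      (c₂ := P.vtx (e + 1) - q) ?_ ?_ ?_
    · exact sub_eq_zero.mp hd
    · have expand : (y' - (q + τv • (z' - q))).1 * (P.vtx e - q).2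
          - (y' - (q + τv • (z' - q))).2 * (P.vtx e - q).1
          = cross2 q y' (P.vtx e) - cross2 q (q + τv • (z' - q)) (P.vtx e) := by
        simp only [cross2, Prod.fst_sub, Prod.snd_sub, Prod.fst_add, Prod.snd_add,
          Prod.smul_fst, Prod.smul_snd, smul_eq_mul]
        ring
      rw [expand, hval1, sub_self]
    · have expand : (y' - (q + τv • (z' - q))).1 * (P.vtx (e + 1) - q).2
          - (y' - (q + τv • (z' - q))).2 * (P.vtx (e + 1) - q).1
          = cross2 q y' (P.vtx (e + 1)) - cross2 q (q + τv • (z' - q)) (P.vtx (e + 1)) := by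
        simp only [cross2, Prod.fst_sub, Prod.snd_sub, Prod.fst_add, Prod.snd_add,
          Prod.smul_fst, Prod.smul_snd, smul_eq_mul]
        ring
      rw [expand, hval2, sub_self]
    · have : (P.vtx e - q).1 * (P.vtx (e + 1) - q).2
          - (P.vtx e - q).2 * (P.vtx (e + 1) - q).1 = Kay P q e := by
        simp only [Kay, cross2, Prod.fst_sub, Prod.snd_sub]
      rw [this]
      exact hKne
  refine ⟨y', edge_subset_boundary hy'edge, ?_, ?_⟩
  · rw [hid]
    exact seg_mk hτpos.le hτ'.le
  · intro h
    rw [h] at hid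
    have hthis : z' - q = τv • (z' - q) := by
      nth_rewrite 1 [hid]
      rw [add_sub_cancel_left]
    have hzero : (1 - τv) • (z' - q) = 0 := by
      rw [sub_smul, one_smul, sub_eq_zero]
      exact hthis
    rcases smul_eq_zero.mp hzero with h' | h'
    · have h1 : τv = 1 := by linarith
      linarith
    · exact hzq' (sub_eq_zero.mp h')

end NoCrit
namespace NoCrit

variable {P : SimplePolygon} {q : ℝ × ℝ} {ε : ℝ}

open Filter Topology Bornology

lemma ev_lt {w z : ℝ × ℝ} (h : ε * cross2 q z w < 0) :
    ∀ᶠ z' in nhds z, ε * cross2 q z' w < 0 :=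
  (continuous_const.mul (cross2_cont q w)).continuousAt.eventually (eventually_lt_nhds h)

lemma ev_gt {w z : ℝ × ℝ} (h : 0 < ε * cross2 q z w) :
    ∀ᶠ z' in nhds z, 0 < ε * cross2 q z' w :=
  (continuous_const.mul (cross2_cont q w)).continuousAt.eventually (eventually_gt_nhds h)

lemma sub_add_cancel'' (j : ZMod P.n) : j - 1 + 1 = j := by ring

lemma notF_ev (hK : ∀ i, 0 < ε * Kay P q i) (hqb : q ∉ P.boundary)
    {z : ℝ × ℝ} (hzb : z ∈ P.boundary) (hzF : z ∉ Fstar P q) :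
    ∀ᶠ z' in nhds z, z' ∉ Fstar P q := by
  have hwit : ∃ y, y ∈ P.boundary ∧ y ∈ segment ℝ q z ∧ y ≠ z := by
    by_contra h
    push_neg at h
    exact hzF ⟨hzb, fun y hy hseg => h y hy hseg⟩
  obtain ⟨y, hyb, hyseg, hyne⟩ := hwit
  obtain ⟨b0, hb00, hb01, hvec⟩ := seg_rep hyseg
  have hyq : y ≠ q := fun h => hqb (h ▸ hyb)
  have hb0pos : 0 < b0 := by
    rcases hb00.eq_or_lt with h | h
    · exfalso; apply hyq; rw [← h, zero_smul, sub_eq_zero] at hvec; exact hvec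
    · exact h
  have hb0lt : b0 < 1 := by
    rcases hb01.lt_or_eq with h | h
    · exact h
    · exfalso; apply hyne; rw [h, one_smul] at hvec; exact sub_left_inj.mp hvec
  obtain ⟨j, hyj⟩ := Set.mem_iUnion.mp hyb
  obtain ⟨a, b, ha, hb, hab, hyr⟩ := edge_rep hyj
  have hyve : cross2 q y (P.vtx j) = - (b * Kay P q j) := by
    rw [hyr, cross2_combo hab, cross2_self, show cross2 q (P.vtx (j + 1)) (P.vtx j)
      = - Kay P q j by rw [cross2_swap]; rfl]
    ring
  have hyve1 : cross2 q y (P.vtx (j + 1)) = a * Kay P q j := by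
    rw [hyr, cross2_combo hab, cross2_self,
      show cross2 q (P.vtx j) (P.vtx (j + 1)) = Kay P q j from rfl]
    ring
  have key : ∀ w, cross2 q y w = b0 * cross2 q z w := fun w => cross2_smul_rel hvec w
  -- helper facts giving the sign of `ε * cross2 q z w`
  have neg_at : ∀ w c, cross2 q y w = - (c * Kay P q j) → 0 < c →
      ε * cross2 q z w < 0 := by
    intro w c hval hcpos
    have e0 : b0 * cross2 q z w = - (c * Kay P q j) := (key w).symm.trans hval
    have e1 : b0 * (ε * cross2 q z w) = - (c * (ε * Kay P q j)) := by
      linear_combination ε * e0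
    by_contra hcon
    push_neg at hcon
    have h2 := mul_nonneg hb0pos.le hcon
    have h3 := mul_pos hcpos (hK j)
    linarith
  have negK_at : ∀ w (i : ZMod P.n), cross2 q y w = - Kay P q i →
      ε * cross2 q z w < 0 := by
    intro w i hval
    have e0 : b0 * cross2 q z w = - Kay P q i := (key w).symm.trans hval
    have e1 : b0 * (ε * cross2 q z w) = - (ε * Kay P q i) := by
      linear_combination ε * e0
    by_contra hcon
    push_neg at hcon
    have h2 := mul_nonneg hb0pos.le hcon
    have h3 := hK i
    linarith
  have posK_at : ∀ w (i : ZMod P.n), cross2 q y w = Kay P q i →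
      0 < ε * cross2 q z w := by
    intro w i hval
    have e0 : b0 * cross2 q z w = Kay P q i := (key w).symm.trans hval
    have e1 : b0 * (ε * cross2 q z w) = ε * Kay P q i := by
      linear_combination ε * e0
    by_contra hcon
    push_neg at hcon
    have h2 := mul_nonpos_of_nonneg_of_nonpos hb0pos.le hcon
    have h3 := hK i
    linarith
  have pos_at : ∀ w c, cross2 q y w = c * Kay P q j → 0 < c →
      0 < ε * cross2 q z w := by
    intro w c hval hcpos
    have e0 : b0 * cross2 q z w = c * Kay P q j := (key w).symm.trans hval
    have e1 : b0 * (ε * cross2 q z w) = c * (ε * Kay P q j) := by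
      linear_combination ε * e0
    by_contra hcon
    push_neg at hcon
    have h2 := mul_nonpos_of_nonneg_of_nonpos hb0pos.le hcon
    have h3 := mul_pos hcpos (hK j)
    linarith
  have H1 := hit hK hqb hyj hvec hb0pos hb0lt
  rcases ha.eq_or_lt with ha0 | hapos
  · -- y = vtx (j+1); use edges j and j+1
    have hb1' : b = 1 := by linarith
    have hyvtx : y = P.vtx (j + 1) := by rw [hyr, ← ha0, hb1']; simp
    have hy2 : y ∈ P.edge (j + 1) := hyvtx ▸ vtx_mem_edge_left (j + 1)
    have H2 := hit hK hqb hy2 hvec hb0pos hb0lt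
    have evX : ∀ᶠ z' in nhds z, ε * cross2 q z' (P.vtx j) < 0 :=
      ev_lt (neg_at _ 1 (by rw [hyve, hb1']) one_pos)
    have evY : ∀ᶠ z' in nhds z, 0 < ε * cross2 q z' (P.vtx (j + 1 + 1)) := by
      refine ev_gt (posK_at _ (j + 1) ?_)
      rw [hyvtx]
      rfl
    filter_upwards [H1, H2, evX, evY] with z' h1 h2 hx hy' hF
    rcases le_total (ε * cross2 q z' (P.vtx (j + 1))) 0 with hs | hs
    · obtain ⟨y', hy'b, hy'seg, hy'ne⟩ := h2 ⟨hs, hy'.le⟩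
      exact hy'ne (hF.2 y' hy'b hy'seg)
    · obtain ⟨y', hy'b, hy'seg, hy'ne⟩ := h1 ⟨hx.le, hs⟩
      exact hy'ne (hF.2 y' hy'b hy'seg)
  · rcases hb.eq_or_lt with hb0' | hbpos
    · -- y = vtx j; use edges j-1 and j
      have ha1 : a = 1 := by linarith
      have hyvtx : y = P.vtx j := by rw [hyr, ← hb0', ha1]; simp
      have hy2 : y ∈ P.edge (j - 1) := by
        have := vtx_mem_edge_right (P := P) (j - 1)
        rwa [sub_add_cancel'', ← hyvtx] at this
      have H2 := hit hK hqb hy2 hvec hb0pos hb0lt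
      have evY : ∀ᶠ z' in nhds z, 0 < ε * cross2 q z' (P.vtx (j + 1)) :=
        ev_gt (pos_at _ a (by rw [hyve1]) hapos)
      have evX : ∀ᶠ z' in nhds z, ε * cross2 q z' (P.vtx (j - 1)) < 0 := by
        refine ev_lt (negK_at _ (j - 1) ?_)
        rw [hyvtx, cross2_swap]
        have : cross2 q (P.vtx (j - 1)) (P.vtx j) = Kay P q (j - 1) := by
          rw [Kay, sub_add_cancel'']
        rw [this]
      filter_upwards [H1, H2, evY, evX] with z' h1 h2 hy' hx hF
      rcases le_total (ε * cross2 q z' (P.vtx j)) 0 with hs | hs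
      · obtain ⟨y', hy'b, hy'seg, hy'ne⟩ := h1 ⟨hs, hy'.le⟩
        exact hy'ne (hF.2 y' hy'b hy'seg)
      · obtain ⟨y', hy'b, hy'seg, hy'ne⟩ := h2 ⟨hx.le, by rw [sub_add_cancel'']; exact hs⟩
        exact hy'ne (hF.2 y' hy'b hy'seg)
    · -- interior point of edge j
      have evX : ∀ᶠ z' in nhds z, ε * cross2 q z' (P.vtx j) < 0 :=
        ev_lt (neg_at _ b (by rw [hyve]) hbpos)
      have evY : ∀ᶠ z' in nhds z, 0 < ε * cross2 q z' (P.vtx (j + 1)) :=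
        ev_gt (pos_at _ a (by rw [hyve1]) hapos)
      filter_upwards [H1, evX, evY] with z' h1 hx hy' hF
      obtain ⟨y', hy'b, hy'seg, hy'ne⟩ := h1 ⟨hx.le, hy'.le⟩
      exact hy'ne (hF.2 y' hy'b hy'seg)

end NoCrit
namespace NoCrit

variable {P : SimplePolygon} {q : ℝ × ℝ} {ε : ℝ}

open Filter Topology Bornology

/-- Pairs of boundary points radially aligned with `q`, on edges `j` and `m`. -/
def Dset (P : SimplePolygon) (q : ℝ × ℝ) (j m : ZMod P.n) : Set ((ℝ × ℝ) × (ℝ × ℝ)) :=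
  {p | p.1 ∈ P.edge j ∧ p.2 ∈ P.edge m ∧ p.1 ∈ segment ℝ q p.2 ∧ p.1 ≠ p.2}

lemma Dset_rel (hqb : q ∉ P.boundary) {j m : ZMod P.n} {p : (ℝ × ℝ) × (ℝ × ℝ)}
    (hp : p ∈ Dset P q j m) : ∃ b0 : ℝ, 0 < b0 ∧ p.1 - q = b0 • (p.2 - q) := by
  obtain ⟨h1, h2, hseg, hne⟩ := hp
  obtain ⟨b0, hb00, _, hvec⟩ := seg_rep hseg
  refine ⟨b0, ?_, hvec⟩
  rcases hb00.eq_or_lt with h | h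
  · exfalso
    rw [← h, zero_smul, sub_eq_zero] at hvec
    exact hqb (hvec ▸ edge_subset_boundary h1)
  · exact h

lemma Dset_self_empty (hw : P.wgp q) (hqb : q ∉ P.boundary) (j : ZMod P.n) :
    Dset P q j j = ∅ := by
  ext p
  simp only [Set.mem_empty_iff_false, iff_false]
  intro hp
  obtain ⟨b0, hb0, hvec⟩ := Dset_rel hqb hp
  have hcr : cross2 q p.1 p.2 = b0 * cross2 q p.2 p.2 := cross2_smul_rel hvec p.2
  rw [cross2_self, mul_zero] at hcr
  exact hp.2.2.2 (eq_of_same_edge hw hp.1 hp.2.1 hcr)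

lemma Dset_adj_empty (hK : ∀ i, 0 < ε * Kay P q i) (hqb : q ∉ P.boundary) (j : ZMod P.n) :
    Dset P q j (j + 1) = ∅ := by
  ext p
  simp only [Set.mem_empty_iff_false, iff_false]
  intro hp
  obtain ⟨b0, hb0, hvec⟩ := Dset_rel hqb hp
  exact hp.2.2.2 (adj_edges hK hp.1 hp.2.1 hb0 hvec)

lemma Dset_adj'_empty (hK : ∀ i, 0 < ε * Kay P q i) (hqb : q ∉ P.boundary) (j : ZMod P.n) :
    Dset P q (j + 1) j = ∅ := by
  ext p
  simp only [Set.mem_empty_iff_false, iff_false]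
  intro hp
  obtain ⟨b0, hb0, hvec⟩ := Dset_rel hqb hp
  exact hp.2.2.2 (adj_edges' hK hp.1 hp.2.1 hb0 hvec)

/-- The closed superset of the closure of `Dset`. -/
lemma closure_Dset_sub (j m : ZMod P.n) :
    closure (Dset P q j m) ⊆ {p : (ℝ × ℝ) × (ℝ × ℝ) | p.1 ∈ P.edge j} ∩
      ((fun s : ℝ × (ℝ × ℝ) => ((1 - s.1) • q + s.1 • s.2, s.2)) ''
        (Set.Icc (0 : ℝ) 1 ×ˢ P.edge m)) := by
  apply closure_minimal
  · rintro p ⟨h1, h2, hseg, -⟩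
    refine ⟨h1, ?_⟩
    obtain ⟨b0, hb00, hb01, hvec⟩ := seg_rep hseg
    refine ⟨(b0, p.2), ⟨⟨hb00, hb01⟩, h2⟩, ?_⟩
    have : p.1 = q + b0 • (p.2 - q) := by
      rw [← hvec]; abel
    apply Prod.ext
    · show (1 - b0) • q + b0 • p.2 = p.1
      rw [this]; module
    · rfl
  · apply IsClosed.inter
    · exact (edge_closed j).preimage continuous_fst
    · refine IsCompact.isClosed ?_
      apply (isCompact_Icc.prod (edge_compact m)).image
      fun_prop

def Nset (P : SimplePolygon) (q : ℝ × ℝ) : Set (ℝ × ℝ) :=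
  ⋃ j : ZMod P.n, ⋃ m : ZMod P.n, Prod.snd '' closure (Dset P q j m)

lemma Nset_closed (P : SimplePolygon) (q : ℝ × ℝ) : IsClosed (Nset P q) := by
  haveI := nezero_n P
  apply isClosed_iUnion_of_finite
  intro j
  apply isClosed_iUnion_of_finite
  intro m
  refine IsCompact.isClosed (IsCompact.image ?_ continuous_snd)
  refine IsCompact.of_isClosed_subset ((edge_compact j).prod (edge_compact m))
    isClosed_closure ?_
  apply closure_minimal
  · rintro p ⟨h1, h2, -, -⟩
    exact ⟨h1, h2⟩
  · exact (edge_closed j).prod (edge_closed m)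

lemma bd_diff_F_sub_N {z : ℝ × ℝ} (hzb : z ∈ P.boundary) (hzF : z ∉ Fstar P q) :
    z ∈ Nset P q := by
  have hwit : ∃ y, y ∈ P.boundary ∧ y ∈ segment ℝ q z ∧ y ≠ z := by
    by_contra h
    push_neg at h
    exact hzF ⟨hzb, fun y hy hseg => h y hy hseg⟩
  obtain ⟨y, hyb, hyseg, hyne⟩ := hwit
  obtain ⟨j, hyj⟩ := Set.mem_iUnion.mp hyb
  obtain ⟨m, hzm⟩ := Set.mem_iUnion.mp hzb
  refine Set.mem_iUnion.mpr ⟨j, Set.mem_iUnion.mpr ⟨m, ?_⟩⟩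
  exact ⟨(y, z), subset_closure ⟨hyj, hzm, hyseg, hyne⟩, rfl⟩

lemma N_disjoint_F (hw : P.wgp q) (hK : ∀ i, 0 < ε * Kay P q i) (hqb : q ∉ P.boundary)
    {z : ℝ × ℝ} (hzN : z ∈ Nset P q) : z ∉ Fstar P q := by
  intro hzF
  obtain ⟨j, hj⟩ := Set.mem_iUnion.mp hzN
  obtain ⟨m, hm⟩ := Set.mem_iUnion.mp hj
  obtain ⟨y0, hy0cl, hy0snd⟩ := hm
  by_cases h1 : j = m
  · rw [h1, Dset_self_empty hw hqb, closure_empty] at hy0cl; exact hy0cl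
  by_cases h2 : j + 1 = m
  · rw [← h2, Dset_adj_empty hK hqb, closure_empty] at hy0cl; exact hy0cl
  by_cases h3 : m + 1 = j
  · rw [← h3, Dset_adj'_empty hK hqb, closure_empty] at hy0cl; exact hy0cl
  obtain ⟨hy01, ⟨⟨t, z2⟩, ⟨⟨ht0, ht1⟩, hz2m⟩, heq⟩⟩ := closure_Dset_sub j m hy0cl
  have hy02 : y0.2 = z2 := by rw [← heq]
  have hz2 : z2 = z := by rw [← hy02]; exact hy0snd
  have hy0first : y0.1 = (1 - t) • q + t • z2 := by rw [← heq]
  have hy0seg : y0.1 ∈ segment ℝ q z := by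
    rw [← hz2]
    exact ⟨1 - t, t, by linarith, ht0, by ring, hy0first.symm⟩
  have hy0eq : y0.1 = z := hzF.2 y0.1 (edge_subset_boundary hy01) hy0seg
  have hzj : z ∈ P.edge j := hy0eq ▸ hy01
  have hzm' : z ∈ P.edge m := hz2 ▸ hz2m
  have hemp := P.nondegenerate j m h1 h2 h3
  exact Set.eq_empty_iff_forall_notMem.mp hemp z ⟨hzj, hzm'⟩

/-- Main global lemma: every boundary point is a radial first hit. -/
lemma Fstar_eq_boundary (hw : P.wgp q) (hnc : ∀ i : ZMod P.n, ¬ P.isCritical q i)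
    (hqb : q ∉ P.boundary) : Fstar P q = P.boundary := by
  obtain ⟨ε, hεne, hK⟩ := exists_eps hw hnc
  have hFsub : Fstar P q ⊆ P.boundary := fun z hz => hz.1
  have hFclosed : IsClosed (Fstar P q) := by
    rw [← closure_subset_iff_isClosed]
    intro z hz
    have hzb : z ∈ P.boundary := closure_minimal hFsub (boundary_closed P) hz
    by_contra hzF
    obtain ⟨w, hwF, hwnF⟩ := ((mem_closure_iff_frequently.mp hz).and_eventually
      (notF_ev hK hqb hzb hzF)).exists
    exact hwnF hwF
  by_contra hne
  have hNne : (P.boundary \ Fstar P q).Nonempty := by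
    rcases Set.eq_empty_or_nonempty (P.boundary \ Fstar P q) with h | h
    · exact absurd (Set.Subset.antisymm hFsub (fun z hz => by
        by_contra hzF
        exact Set.eq_empty_iff_forall_notMem.mp h z ⟨hz, hzF⟩)) hne
    · exact h
  obtain ⟨z0, hz0b, hz0F⟩ := hNne
  obtain ⟨x0, hx0F⟩ := Fstar_nonempty hqb
  have hconn := boundary_preconnected P
  have hcover : P.boundary ⊆ (Nset P q)ᶜ ∪ (Fstar P q)ᶜ := by
    intro w hw'
    by_cases hwN : w ∈ Nset P q
    · exact Or.inr (N_disjoint_F hw hK hqb hwN)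
    · exact Or.inl hwN
  have hu : (P.boundary ∩ (Nset P q)ᶜ).Nonempty :=
    ⟨x0, hx0F.1, fun hN => N_disjoint_F hw hK hqb hN hx0F⟩
  have hv : (P.boundary ∩ (Fstar P q)ᶜ).Nonempty := ⟨z0, hz0b, hz0F⟩
  obtain ⟨w, hwb, hwN, hwF⟩ := hconn _ _ (Nset_closed P q).isOpen_compl
    hFclosed.isOpen_compl hcover hu hv
  exact hwN (bd_diff_F_sub_N hwb hwF)

/-- Star-shapedness: no boundary point strictly between `q` and a boundary point. -/
lemma star (hw : P.wgp q) (hnc : ∀ i : ZMod P.n, ¬ P.isCritical q i)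
    (hqb : q ∉ P.boundary) {x y : ℝ × ℝ} (hx : x ∈ P.boundary) (hy : y ∈ P.boundary)
    (hseg : y ∈ segment ℝ q x) : y = x := by
  have := Fstar_eq_boundary hw hnc hqb
  rw [← this] at hx
  exact hx.2 y hy hseg

end NoCrit
namespace NoCrit

variable {P : SimplePolygon} {q : ℝ × ℝ}

open Filter Topology Bornology

lemma tail_not_bounded {u : ℝ × ℝ} (hu : u ≠ 0) {s₀ : ℝ} (hs₀ : 0 ≤ s₀)
    (hT : ∀ s, s₀ ≤ s → q + s • u ∉ P.boundary) {s : ℝ} (hs : s₀ ≤ s) :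
    ¬ IsBounded (connectedComponentIn P.boundaryᶜ (q + s • u)) := by
  intro hbdd
  set T := (fun r : ℝ => q + r • u) '' Set.Ici s with hTdef
  have hTsub : T ⊆ P.boundaryᶜ := by
    rintro _ ⟨r, hr, rfl⟩
    exact hT r (le_trans hs hr)
  have hTpre : IsPreconnected T :=
    isPreconnected_Ici.image _ (by fun_prop : Continuous fun r : ℝ => q + r • u).continuousOn
  have hmem : q + s • u ∈ T := ⟨s, le_refl s, rfl⟩
  have hTcomp : T ⊆ connectedComponentIn P.boundaryᶜ (q + s • u) :=
    hTpre.subset_connectedComponentIn hmem hTsub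
  obtain ⟨R, hR⟩ := (Metric.isBounded_iff_subset_closedBall q).mp (hbdd.subset hTcomp)
  have hnu : 0 < ‖u‖ := norm_pos_iff.mpr hu
  set r := max s ((R + 1) / ‖u‖) with hrdef
  have hrs : s ≤ r := le_max_left _ _
  have hr0 : 0 ≤ r := le_trans (le_trans hs₀ hs) hrs
  have hmem2 : q + r • u ∈ T := ⟨r, hrs, rfl⟩
  have hdist : dist (q + r • u) q ≤ R := by
    have := hR hmem2
    simpa [Metric.mem_closedBall] using this
  have hdist2 : dist (q + r • u) q = r * ‖u‖ := by
    rw [dist_eq_norm, add_sub_cancel_left, norm_smul, Real.norm_of_nonneg hr0]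
  have hge : (R + 1) / ‖u‖ ≤ r := le_max_right _ _
  have : R + 1 ≤ r * ‖u‖ := (div_le_iff₀ hnu).mp hge
  linarith [hdist2 ▸ hdist]

lemma tail_off_boundary (hw : P.wgp q) (hnc : ∀ i : ZMod P.n, ¬ P.isCritical q i)
    (hqb : q ∉ P.boundary) {x : ℝ × ℝ} (hx : x ∈ P.boundary) {s : ℝ} (hs : 1 < s) :
    q + s • (x - q) ∉ P.boundary := by
  intro hmem
  have hxq : x ≠ q := fun h => hqb (h ▸ hx)
  have hseg : x ∈ segment ℝ q (q + s • (x - q)) := by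
    have h1 : q + (1 / s) • ((q + s • (x - q)) - q) = x := by
      rw [add_sub_cancel_left, smul_smul, one_div_mul_cancel (by linarith : s ≠ 0), one_smul]
      abel
    have := seg_mk (q := q) (z := q + s • (x - q)) (b0 := 1 / s)
      (by positivity) (by rw [div_le_one (by linarith)]; linarith)
    rwa [h1] at this
  have heq := star hw hnc hqb hmem hx hseg
  have : (s - 1) • (x - q) = 0 := by
    rw [sub_smul, one_smul]
    nth_rewrite 2 [heq]
    abel
  rcases smul_eq_zero.mp this with h | h
  · have : s = 1 := by linarith
    linarith
  · exact hxq (sub_eq_zero.mp h)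

lemma open_seg_rep {z p : ℝ × ℝ} (h : z ∈ openSegment ℝ q p) :
    ∃ b0 : ℝ, 0 < b0 ∧ b0 < 1 ∧ z - q = b0 • (p - q) := by
  obtain ⟨a, b, ha, hb, hab, hs⟩ := h
  refine ⟨b, hb, by linarith, ?_⟩
  rw [← hs]
  have ha' : a = 1 - b := by linarith
  subst ha'
  module

lemma crossSet_empty (hw : P.wgp q) (hnc : ∀ i : ZMod P.n, ¬ P.isCritical q i)
    (hq : q ∈ P.inside) {p : ℝ × ℝ} (hp : p ∈ P.region) : P.crossSet q p = ∅ := by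
  have hqb : q ∉ P.boundary := hq.1
  ext i
  simp only [SimplePolygon.crossSet, Set.mem_setOf_eq, Set.mem_empty_iff_false, iff_false]
  rintro ⟨z, hzo, hze⟩
  have hzb : z ∈ P.boundary := edge_subset_boundary hze
  obtain ⟨b0, hb00, hb01, hzvec⟩ := open_seg_rep hzo
  have hpq : p ≠ q := by
    intro h
    rw [h, sub_self, smul_zero, sub_eq_zero] at hzvec
    exact hqb (hzvec ▸ hzb)
  have hpu : p - q ≠ 0 := sub_ne_zero.mpr hpq
  rcases hp with hin | hbd
  · -- p inside : the ray beyond p would be in an unbounded component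
    have hT : ∀ s : ℝ, 1 ≤ s → q + s • (p - q) ∉ P.boundary := by
      intro s hs1 hmem
      have hzseg : z ∈ segment ℝ q (q + s • (p - q)) := by
        have h1 : q + (b0 / s) • ((q + s • (p - q)) - q) = z := by
          rw [add_sub_cancel_left, smul_smul, div_mul_cancel₀ b0 (by linarith : s ≠ 0)]
          rw [← hzvec]
          abel
        have := seg_mk (q := q) (z := q + s • (p - q)) (b0 := b0 / s)
          (by positivity) (by rw [div_le_one (by linarith)]; linarith)
        rwa [h1] at this
      have heq := star hw hnc hqb hmem hzb hzseg
      have : (b0 - s) • (p - q) = 0 := by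
        rw [sub_smul, ← hzvec]
        rw [sub_eq_zero]
        nth_rewrite 1 [heq]
        rw [add_sub_cancel_left]
      rcases smul_eq_zero.mp this with h | h
      · have : b0 = s := by linarith
        linarith
      · exact hpu h
    have hnb := tail_not_bounded (P := P) hpu (zero_le_one) hT (le_refl 1)
    rw [one_smul] at hnb
    have : q + (p - q) = p := by abel
    rw [this] at hnb
    exact hnb hin.2
  · -- p on the boundary
    have heq := star hw hnc hqb hbd hzb (openSegment_subset_segment ℝ q p hzo)
    have : (b0 - 1) • (p - q) = 0 := by
      rw [sub_smul, ← hzvec, one_smul, heq, sub_self]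
    rcases smul_eq_zero.mp this with h | h
    · have : b0 = 1 := by linarith
      linarith
    · exact hpu h

lemma comp_eventually_eq {x : ℝ × ℝ} (hx : x ∉ P.boundary) :
    ∀ᶠ y in nhds x, connectedComponentIn P.boundaryᶜ y = connectedComponentIn P.boundaryᶜ x := by
  obtain ⟨r, hr, hball⟩ := Metric.isOpen_iff.mp (boundary_closed P).isOpen_compl x hx
  filter_upwards [Metric.ball_mem_nhds x hr] with y hy
  exact (connectedComponentIn_eq
    ((convex_ball x r).isPreconnected.subset_connectedComponentIn (Metric.mem_ball_self hr)
      hball hy)).symm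

lemma inside_open (P : SimplePolygon) : IsOpen P.inside := by
  rw [isOpen_iff_mem_nhds]
  intro x hx
  filter_upwards [comp_eventually_eq hx.1,mem_nhds_iff.mpr
    ⟨P.boundaryᶜ, le_refl _, (boundary_closed P).isOpen_compl, hx.1⟩] with y h1 h2
  exact ⟨h2, h1 ▸ hx.2⟩

lemma outside_open (P : SimplePolygon) :
    IsOpen {x | x ∉ P.boundary ∧ ¬ IsBounded (connectedComponentIn P.boundaryᶜ x)} := by
  rw [isOpen_iff_mem_nhds]
  intro x hx
  filter_upwards [comp_eventually_eq hx.1, mem_nhds_iff.mpr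
    ⟨P.boundaryᶜ, le_refl _, (boundary_closed P).isOpen_compl, hx.1⟩] with y h1 h2
  exact ⟨h2, h1 ▸ hx.2⟩

lemma region_closed (P : SimplePolygon) : IsClosed P.region := by
  rw [← isOpen_compl_iff]
  have : P.regionᶜ = {x | x ∉ P.boundary ∧ ¬ IsBounded (connectedComponentIn P.boundaryᶜ x)} := by
    ext x
    simp only [SimplePolygon.region, SimplePolygon.inside, Set.mem_compl_iff, Set.mem_union,
      Set.mem_setOf_eq, not_or]
    tauto
  rw [this]
  exact outside_open P

lemma frontier_region (hw : P.wgp q) (hnc : ∀ i : ZMod P.n, ¬ P.isCritical q i)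
    (hq : q ∈ P.inside) : frontier P.region = P.boundary := by
  have hqb : q ∉ P.boundary := hq.1
  apply Set.Subset.antisymm
  · rw [(region_closed P).frontier_eq]
    rintro x ⟨hxr, hxi⟩
    rcases hxr with hin | hbd
    · exact absurd (interior_maximal Set.subset_union_left (inside_open P) hin) hxi
    · exact hbd
  · intro x hx
    have hxq : x ≠ q := fun h => hqb (h ▸ hx)
    have hxu : x - q ≠ 0 := sub_ne_zero.mpr hxq
    constructor
    · exact subset_closure (Or.inr hx)
    · intro hxint
      obtain ⟨r, hr0, hball⟩ := Metric.isOpen_iff.mp isOpen_interior x hxint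
      set s := 1 + r / (2 * ‖x - q‖) with hsdef
      have hnx : 0 < ‖x - q‖ := norm_pos_iff.mpr hxu
      have hs1 : 1 < s := by
        rw [hsdef]
        have : 0 < r / (2 * ‖x - q‖) := by positivity
        linarith
      set xs := q + s • (x - q) with hxs
      have hdist : dist xs x < r := by
        have h1 : xs - x = (s - 1) • (x - q) := by
          rw [hxs, sub_smul, one_smul]
          abel
        have h4 : (s - 1) * ‖x - q‖ = r / 2 := by
          rw [hsdef]
          field_simp
          ring
        rw [dist_eq_norm, h1, norm_smul, Real.norm_of_nonneg (by linarith), h4]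
        linarith
      have hxs_reg : xs ∈ P.region := interior_subset (hball (Metric.mem_ball.mpr hdist))
      have hxs_nb : xs ∉ P.boundary := tail_off_boundary hw hnc hqb hx hs1
      have hxs_nin : ¬ IsBounded (connectedComponentIn P.boundaryᶜ xs) := by
        apply tail_not_bounded (P := P) hxu (le_of_lt (lt_trans one_pos hs1))
          (fun s' hs' => tail_off_boundary hw hnc hqb hx (lt_of_lt_of_le hs1 hs'))
          (le_refl s)
      rcases hxs_reg with hin | hbd
      · exact hxs_nin hin.2
      · exact hxs_nb hbd

end NoCrit


open NoCrit in
/-- If `P` has no critical vertices with respect to `q`, then `V_k(P,q) = P`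
for every `k`, and in particular `∂V_k(P,q) = ∂P`. -/
theorem vis_eq_region_of_no_critical (P : SimplePolygon) (q : ℝ × ℝ)
    (hq : q ∈ P.inside) (hw : P.wgp q)
    (hnc : ∀ i : ZMod P.n, ¬ P.isCritical q i) (k : ℕ) :
    P.vis q k = P.region ∧ frontier (P.vis q k) = P.boundary := by
  have hvis : P.vis q k = P.region := by
    ext p
    simp only [SimplePolygon.vis, Set.mem_setOf_eq]
    constructor
    · exact fun h => h.1
    · intro h
      refine ⟨h, ?_⟩
      rw [SimplePolygon.crossCount, crossSet_empty hw hnc hq h, Set.ncard_empty]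
      exact Nat.zero_le k
  exact ⟨hvis, by rw [hvis]; exact frontier_region hw hnc hq⟩
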